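/- Let M = {w₁, …, w_m} be a set of nontrivial freely reduced words in the free group F on a finite set X. Then M is Nielsen reduced if and only if: (1) for each w_i, both the major initial segment and the major terminal segment of w_i are isolated; and (2) for each w_i of even free length, either its left half or its right half is isolated. -/

import Mathlib

set_option linter.unusedSectionVars false



namespace FreeGroup

variable {α : Type*} [DecidableEq α]

/-- Non-cancelling adjacency relation. -/
def NC (a b : α × Bool) : Prop := ¬(a.1 = b.1 ∧ a.2 = !b.2)

theorem invRev_append' (A B : List (α × Bool)) :
    invRev (A ++ B) = invRev B ++ invRev A := by
  simp [invRev]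

theorem invRev_concat (c : List (α × Bool)) (a : α × Bool) :
    invRev (c ++ [a]) = (a.1, !a.2) :: invRev c := by
  simp [invRev]

theorem reduced_of_chain {L : List (α × Bool)} (h : List.Chain' (NC (α := α)) L) :
    reduce L = L := by
  induction L with
  | nil => rfl
  | cons a t ih =>
    have ht : List.Chain' (NC (α := α)) t := h.tail
    rw [reduce.cons, ih ht]
    cases t with
    | nil => rfl
    | cons b t' =>
      have hab : ¬(a.1 = b.1 ∧ a.2 = !b.2) := List.isChain_cons_cons.1 h |>.1
      simp [hab]

theorem exists_cancel_of_not_chain {L : List (α × Bool)} (h : ¬ List.Chain' (NC (α := α)) L) :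
    ∃ (L₁ L₂ : List (α × Bool)) (x : α) (b : Bool),
      L = L₁ ++ (x, b) :: (x, !b) :: L₂ := by
  induction L with
  | nil => exact absurd List.isChain_nil h
  | cons a t ih =>
    cases t with
    | nil => exact absurd (List.isChain_singleton a) h
    | cons c t' =>
      unfold List.Chain' at h
      rw [List.isChain_cons_cons] at h
      push_neg at h
      by_cases hac : a.1 = c.1 ∧ a.2 = !c.2
      · refine ⟨[], t', a.1, a.2, ?_⟩
        have : c = (a.1, !a.2) := by
          obtain ⟨h1, h2⟩ := hac
          cases c; cases a
          simp_all
        simp [this]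
      · obtain ⟨L₁, L₂, x, b, hdec⟩ := ih (h hac)
        exact ⟨a :: L₁, L₂, x, b, by simp [hdec]⟩

theorem chain_of_reduced {L : List (α × Bool)} (h : reduce L = L) :
    List.Chain' (NC (α := α)) L := by
  by_contra hc
  obtain ⟨L₁, L₂, x, b, rfl⟩ := exists_cancel_of_not_chain hc
  exact reduce.not h

theorem reduced_infix {L A B C : List (α × Bool)} (h : reduce L = L)
    (hL : L = A ++ B ++ C) : reduce B = B := by
  apply reduced_of_chain
  by_contra hc
  obtain ⟨L₁, L₂, x, b, hdec⟩ := exists_cancel_of_not_chain hc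
  subst hdec
  refine @reduce.not _ _ _ L ((A ++ L₁)) (L₂ ++ C) x b ?_
  rw [h, hL]
  simp

theorem mul_decomp (L₁ L₂ : List (α × Bool)) (h₁ : reduce L₁ = L₁) (h₂ : reduce L₂ = L₂) :
    ∃ p c q : List (α × Bool),
      L₁ = p ++ c ∧ L₂ = invRev c ++ q ∧ reduce (L₁ ++ L₂) = p ++ q := by
  induction L₂ generalizing L₁ with
  | nil =>
    exact ⟨L₁, [], [], by simp, by simp [invRev], by simpa using h₁⟩
  | cons b t ih =>
    have ht : reduce t = t := reduced_infix h₂ (by simp : b :: t = [b] ++ t ++ [])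
    rcases L₁.eq_nil_or_concat with rfl | ⟨L₁', a, rfl⟩
    · exact ⟨[], [], b :: t, by simp, by simp [invRev_empty], by simpa using h₂⟩
    · rw [List.concat_eq_append] at *
      by_cases hab : a.1 = b.1 ∧ a.2 = !b.2
      · have hb : b = (a.1, !a.2) := by
          obtain ⟨h1, h2⟩ := hab; cases a; cases b; simp_all
        have h₁' : reduce L₁' = L₁' := reduced_infix h₁ (by simp : L₁' ++ [a] = [] ++ L₁' ++ [a])
        obtain ⟨p, c, q, e1, e2, e3⟩ := ih L₁' h₁' ht
        refine ⟨p, c ++ [a], q, by rw [e1]; simp, ?_, ?_⟩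
        · rw [invRev_concat, hb, e2]; simp
        · have hstep : Red.Step ((L₁' ++ [a]) ++ b :: t) (L₁' ++ t) := by
            have := @Red.Step.not α L₁' t a.1 a.2
            simpa [hb, Prod.mk.eta] using this
          rw [reduce.Step.eq hstep, e3]
      · refine ⟨L₁' ++ [a], [], b :: t, by simp, by simp [invRev_empty], ?_⟩
        apply reduced_of_chain
        unfold List.Chain'
        rw [List.isChain_append]
        refine ⟨chain_of_reduced h₁, chain_of_reduced h₂, ?_⟩
        intro x hx y hy
        rw [List.getLast?_concat] at hx
        simp at hx hy
        subst hx; subst hy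
        exact hab

theorem toWord_mul_decomp (x y : FreeGroup α) :
    ∃ p c q : List (α × Bool),
      x.toWord = p ++ c ∧ y.toWord = invRev c ++ q ∧ (x * y).toWord = p ++ q := by
  obtain ⟨p, c, q, e1, e2, e3⟩ := mul_decomp x.toWord y.toWord (reduce_toWord x) (reduce_toWord y)
  refine ⟨p, c, q, e1, e2, ?_⟩
  have : x * y = mk (x.toWord ++ y.toWord) := by
    rw [← mul_mk, mk_toWord, mk_toWord]
  rw [this, toWord_mk, e3]

end FreeGroup



/-- A subset `U` of a free group is *Nielsen reduced* if for all
`v₁, v₂, v₃ ∈ U ∪ U⁻¹` the conditions (N0), (N1), (N2) hold. -/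
def NielsenReduced {X : Type*} [DecidableEq X] (U : Set (FreeGroup X)) : Prop :=
  ∀ v₁ ∈ U ∪ U⁻¹, ∀ v₂ ∈ U ∪ U⁻¹, ∀ v₃ ∈ U ∪ U⁻¹,
    v₁ ≠ 1 ∧
    (v₁ * v₂ ≠ 1 → v₁.norm ≤ (v₁ * v₂).norm ∧ v₂.norm ≤ (v₁ * v₂).norm) ∧
    (v₁ * v₂ ≠ 1 → v₂ * v₃ ≠ 1 →
      (v₁.norm : ℤ) - (v₂.norm : ℤ) + (v₃.norm : ℤ) < ((v₁ * v₂ * v₃).norm : ℤ))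

/-- `s` is an initial segment of `w`: the reduced word of `s` is a prefix of the
reduced word of `w`. -/
def InitSeg {X : Type*} [DecidableEq X] (s w : FreeGroup X) : Prop :=
  s.toWord <+: w.toWord

/-- `s` is a terminal segment of `w`: the reduced word of `s` is a suffix of the
reduced word of `w`. -/
def TermSeg {X : Type*} [DecidableEq X] (s w : FreeGroup X) : Prop :=
  s.toWord <:+ w.toWord

/-- The `w`-symbols of a set `M` are the elements of `M` together with their inverses. -/
def Symbols {X : Type*} (M : Set (FreeGroup X)) : Set (FreeGroup X) := M ∪ M⁻¹

/-- The initial segment `s` of the `w`-symbol `w` is *isolated* (w.r.t. `M`) if it does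
not occur as an initial segment of any other `w`-symbol. -/
def IsolatedInit {X : Type*} [DecidableEq X] (M : Set (FreeGroup X))
    (s w : FreeGroup X) : Prop :=
  ∀ v ∈ Symbols M, InitSeg s v → v = w

/-- The terminal segment `s` of the `w`-symbol `w` is *isolated* (w.r.t. `M`) if it is
a terminal segment of no other `w`-symbol. -/
def IsolatedTerm {X : Type*} [DecidableEq X] (M : Set (FreeGroup X))
    (s w : FreeGroup X) : Prop :=
  ∀ v ∈ Symbols M, TermSeg s v → v = w

section Helpers

variable {X : Type*} [DecidableEq X]

theorem initSeg_inv {s w : FreeGroup X} (h : InitSeg s w) : TermSeg s⁻¹ w⁻¹ := by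
  obtain ⟨t, ht⟩ := h
  refine ⟨FreeGroup.invRev t, ?_⟩
  rw [FreeGroup.toWord_inv, FreeGroup.toWord_inv, ← ht, FreeGroup.invRev_append']

theorem termSeg_inv {s w : FreeGroup X} (h : TermSeg s w) : InitSeg s⁻¹ w⁻¹ := by
  obtain ⟨t, ht⟩ := h
  refine ⟨FreeGroup.invRev t, ?_⟩
  rw [FreeGroup.toWord_inv, FreeGroup.toWord_inv, ← ht, FreeGroup.invRev_append']

theorem mem_symbols_inv {M : Set (FreeGroup X)} {v : FreeGroup X}
    (h : v ∈ Symbols M) : v⁻¹ ∈ Symbols M := by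
  rcases h with h | h
  · exact Or.inr (by simpa [Set.mem_inv] using h)
  · exact Or.inl (by simpa [Set.mem_inv] using h)

theorem norm_eq_length {w : FreeGroup X} : w.norm = w.toWord.length := rfl

end Helpers

/-- A set `M` of nontrivial freely reduced words is Nielsen reduced if and only if
(1) the major initial and major terminal segments of each `w ∈ M` are isolated, and
(2) for each `w ∈ M` of even free length, either its left half or its right half is
isolated.  (A major initial segment of `w` is an initial segment `s` with
`|w|/2 < |s| ≤ |w|/2 + 1`, i.e. `|w| < 2|s| ≤ |w| + 2`; the left (right) half of `w`
of even length is the initial (terminal) segment of length `|w|/2`.) -/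
theorem nielsenReduced_iff_segments_isolated
    {X : Type*} [Fintype X] [DecidableEq X] (M : Finset (FreeGroup X))
    (hnt : ∀ w ∈ M, w ≠ (1 : FreeGroup X)) :
    NielsenReduced (M : Set (FreeGroup X)) ↔
      ((∀ w ∈ M,
          (∀ s : FreeGroup X, InitSeg s w → w.norm < 2 * s.norm →
            2 * s.norm ≤ w.norm + 2 → IsolatedInit (M : Set (FreeGroup X)) s w) ∧
          (∀ s : FreeGroup X, TermSeg s w → w.norm < 2 * s.norm →
            2 * s.norm ≤ w.norm + 2 → IsolatedTerm (M : Set (FreeGroup X)) s w)) ∧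
        (∀ w ∈ M, Even w.norm →
          ((∀ s : FreeGroup X, InitSeg s w → 2 * s.norm = w.norm →
              IsolatedInit (M : Set (FreeGroup X)) s w) ∨
           (∀ s : FreeGroup X, TermSeg s w → 2 * s.norm = w.norm →
              IsolatedTerm (M : Set (FreeGroup X)) s w)))) := by
  constructor
  · -- Nielsen reduced implies the isolation conditions
    intro hN
    have hMS : ∀ w ∈ M, (w : FreeGroup X) ∈ Symbols (M : Set (FreeGroup X)) := by
      intro w hw; exact Or.inl (by exact_mod_cast hw)
    constructor
    · intro w hw
      constructor
      · -- major initial segments isolated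
        intro s hsw h1 h2 v hv hsv
        by_contra hvw
        obtain ⟨r, hr⟩ := hsw
        obtain ⟨r', hr'⟩ := hsv
        have hwS := hMS w hw
        have hwinv := mem_symbols_inv hwS
        have hne : w⁻¹ * v ≠ 1 := fun h => hvw (inv_mul_eq_one.mp h).symm
        have hN1 := ((hN w⁻¹ hwinv v hv v hv).2.1 hne).2
        have hwmk : w = FreeGroup.mk s.toWord * FreeGroup.mk r := by
          rw [FreeGroup.mul_mk, hr, FreeGroup.mk_toWord]
        have hvmk : v = FreeGroup.mk s.toWord * FreeGroup.mk r' := by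
          rw [FreeGroup.mul_mk, hr', FreeGroup.mk_toWord]
        have hprod : w⁻¹ * v = (FreeGroup.mk r)⁻¹ * FreeGroup.mk r' := by
          rw [hwmk, hvmk]; group
        have hb : (w⁻¹ * v).norm ≤ r.length + r'.length := by
          rw [hprod]
          calc ((FreeGroup.mk r)⁻¹ * FreeGroup.mk r').norm
              ≤ ((FreeGroup.mk r)⁻¹).norm + (FreeGroup.mk r').norm :=
                FreeGroup.norm_mul_le _ _
            _ ≤ r.length + r'.length := by
                rw [FreeGroup.norm_inv_eq]
                exact Nat.add_le_add FreeGroup.norm_mk_le FreeGroup.norm_mk_le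
        have e1 : w.norm = s.norm + r.length := by
          rw [norm_eq_length, norm_eq_length, ← hr, List.length_append]
        have e2 : v.norm = s.norm + r'.length := by
          rw [norm_eq_length, norm_eq_length, ← hr', List.length_append]
        omega
      · -- major terminal segments isolated
        intro s hsw h1 h2 v hv hsv
        by_contra hvw
        obtain ⟨r, hr⟩ := hsw
        obtain ⟨r', hr'⟩ := hsv
        have hwS := hMS w hw
        have hwinv := mem_symbols_inv hwS
        have hne : v * w⁻¹ ≠ 1 := fun h => hvw (mul_inv_eq_one.mp h)
        have hN1 := ((hN v hv w⁻¹ hwinv v hv).2.1 hne).1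
        have hwmk : w = FreeGroup.mk r * FreeGroup.mk s.toWord := by
          rw [FreeGroup.mul_mk, hr, FreeGroup.mk_toWord]
        have hvmk : v = FreeGroup.mk r' * FreeGroup.mk s.toWord := by
          rw [FreeGroup.mul_mk, hr', FreeGroup.mk_toWord]
        have hprod : v * w⁻¹ = FreeGroup.mk r' * (FreeGroup.mk r)⁻¹ := by
          rw [hwmk, hvmk]; group
        have hb : (v * w⁻¹).norm ≤ r.length + r'.length := by
          rw [hprod]
          calc (FreeGroup.mk r' * (FreeGroup.mk r)⁻¹).norm
              ≤ (FreeGroup.mk r').norm + ((FreeGroup.mk r)⁻¹).norm :=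
                FreeGroup.norm_mul_le _ _
            _ ≤ r'.length + r.length := by
                rw [FreeGroup.norm_inv_eq]
                exact Nat.add_le_add FreeGroup.norm_mk_le FreeGroup.norm_mk_le
            _ = r.length + r'.length := Nat.add_comm _ _
        have e1 : w.norm = r.length + s.norm := by
          rw [norm_eq_length, norm_eq_length, ← hr, List.length_append]
        have e2 : v.norm = r'.length + s.norm := by
          rw [norm_eq_length, norm_eq_length, ← hr', List.length_append]
        omega
    · -- halves of even-length words
      intro w hw hev
      by_contra hcon
      push_neg at hcon
      obtain ⟨hni, hnt2⟩ := hcon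
      simp only [IsolatedInit, IsolatedTerm, not_forall] at hni hnt2
      obtain ⟨s₁, hi1, hl1, u, hu, hsu, huw⟩ := hni
      obtain ⟨s₂, hi2, hl2, v, hv, hsv, hvw⟩ := hnt2
      obtain ⟨B, hB⟩ := hi1       -- w.toWord = s₁.toWord ++ B
      obtain ⟨C, hC⟩ := hi2       -- w.toWord = C ++ s₂.toWord
      obtain ⟨r₁, hr₁⟩ := hsu     -- u.toWord = s₁.toWord ++ r₁
      obtain ⟨r₂, hr₂⟩ := hsv     -- v.toWord = r₂ ++ s₂.toWord
      have hwS := hMS w hw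
      have hlen : s₁.toWord.length = C.length := by
        have h1 := congrArg List.length hB
        have h2 := congrArg List.length hC
        simp only [List.length_append] at h1 h2
        have : s₁.toWord.length = s₁.norm := rfl
        have : s₂.toWord.length = s₂.norm := rfl
        simp only [← norm_eq_length] at h1 h2
        omega
      have hBC : s₁.toWord = C ∧ B = s₂.toWord :=
        List.append_inj (hB.trans hC.symm) hlen
      have hC' : w.toWord = s₁.toWord ++ s₂.toWord := by rw [← hB, hBC.2]
      have hne1 : u⁻¹ * w ≠ 1 := fun h => huw (inv_mul_eq_one.mp h)
      have hne2 : w * v⁻¹ ≠ 1 := fun h => hvw (mul_inv_eq_one.mp h).symm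
      have hN2 := (hN u⁻¹ (mem_symbols_inv hu) w hwS v⁻¹ (mem_symbols_inv hv)).2.2 hne1 hne2
      have humk : u = FreeGroup.mk s₁.toWord * FreeGroup.mk r₁ := by
        rw [FreeGroup.mul_mk, hr₁, FreeGroup.mk_toWord]
      have hvmk : v = FreeGroup.mk r₂ * FreeGroup.mk s₂.toWord := by
        rw [FreeGroup.mul_mk, hr₂, FreeGroup.mk_toWord]
      have hwmk : w = FreeGroup.mk s₁.toWord * FreeGroup.mk s₂.toWord := by
        rw [FreeGroup.mul_mk, ← hC', FreeGroup.mk_toWord]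
      have hprod : u⁻¹ * w * v⁻¹ = (FreeGroup.mk r₁)⁻¹ * (FreeGroup.mk r₂)⁻¹ := by
        rw [humk, hvmk, hwmk]; group
      have hb : (u⁻¹ * w * v⁻¹).norm ≤ r₁.length + r₂.length := by
        rw [hprod]
        calc ((FreeGroup.mk r₁)⁻¹ * (FreeGroup.mk r₂)⁻¹).norm
            ≤ ((FreeGroup.mk r₁)⁻¹).norm + ((FreeGroup.mk r₂)⁻¹).norm :=
              FreeGroup.norm_mul_le _ _
          _ ≤ r₁.length + r₂.length := by
              rw [FreeGroup.norm_inv_eq, FreeGroup.norm_inv_eq]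
              exact Nat.add_le_add FreeGroup.norm_mk_le FreeGroup.norm_mk_le
      have e0 : w.norm = s₁.norm + s₂.norm := by
        rw [norm_eq_length, hC', List.length_append]; rfl
      have e1 : u.norm = s₁.norm + r₁.length := by
        rw [norm_eq_length, ← hr₁, List.length_append]; rfl
      have e2 : v.norm = r₂.length + s₂.norm := by
        rw [norm_eq_length, ← hr₂, List.length_append]; rfl
      rw [FreeGroup.norm_inv_eq, FreeGroup.norm_inv_eq] at hN2
      have hfin : ((u⁻¹ * w * v⁻¹).norm : ℤ) ≤ (r₁.length : ℤ) + (r₂.length : ℤ) := by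
        exact_mod_cast hb
      omega
  · -- isolation conditions imply Nielsen reduced
    rintro ⟨hyp1, hyp2⟩
    -- transfer: isolation of major terminal segments for all symbols
    have hT : ∀ u ∈ Symbols (M : Set (FreeGroup X)), ∀ s : FreeGroup X,
        TermSeg s u → u.norm < 2 * s.norm → 2 * s.norm ≤ u.norm + 2 →
        ∀ x ∈ Symbols (M : Set (FreeGroup X)), TermSeg s x → x = u := by
      intro u hu s hsu h1 h2 x hx hsx
      rcases hu with hu | hu
      · exact (hyp1 u (by exact_mod_cast hu)).2 s hsu h1 h2 x hx hsx
      · have hu' : u⁻¹ ∈ M := by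
          have : u⁻¹ ∈ (M : Set (FreeGroup X)) := hu
          exact_mod_cast this
        have := (hyp1 u⁻¹ hu').1 s⁻¹ (termSeg_inv hsu)
          (by simpa using h1) (by simpa using h2)
          x⁻¹ (mem_symbols_inv hx) (termSeg_inv hsx)
        exact inv_injective this
    have hHalf : ∀ v ∈ Symbols (M : Set (FreeGroup X)), Even v.norm →
        ((∀ s : FreeGroup X, InitSeg s v → 2 * s.norm = v.norm →
            ∀ x ∈ Symbols (M : Set (FreeGroup X)), InitSeg s x → x = v) ∨
         (∀ s : FreeGroup X, TermSeg s v → 2 * s.norm = v.norm →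
            ∀ x ∈ Symbols (M : Set (FreeGroup X)), TermSeg s x → x = v)) := by
      intro v hv hev
      rcases hv with hv | hv
      · rcases hyp2 v (by exact_mod_cast hv) hev with h | h
        · exact Or.inl (fun s hs hl x hx hsx => h s hs hl x hx hsx)
        · exact Or.inr (fun s hs hl x hx hsx => h s hs hl x hx hsx)
      · have hv' : v⁻¹ ∈ M := by
          have : v⁻¹ ∈ (M : Set (FreeGroup X)) := hv
          exact_mod_cast this
        rcases hyp2 v⁻¹ hv' (by simpa using hev) with h | h
        · refine Or.inr (fun s hs hl x hx hsx => ?_)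
          exact inv_injective (h s⁻¹ (termSeg_inv hs) (by simpa using hl)
            x⁻¹ (mem_symbols_inv hx) (termSeg_inv hsx))
        · refine Or.inl (fun s hs hl x hx hsx => ?_)
          exact inv_injective (h s⁻¹ (initSeg_inv hs) (by simpa using hl)
            x⁻¹ (mem_symbols_inv hx) (initSeg_inv hsx))
    -- N1, one-sided
    have hN1core : ∀ u ∈ Symbols (M : Set (FreeGroup X)),
        ∀ v ∈ Symbols (M : Set (FreeGroup X)), u * v ≠ 1 → v.norm ≤ (u * v).norm := by
      intro u hu v hv hne
      by_contra hlt
      push_neg at hlt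
      obtain ⟨p, c, q, e1, e2, e3⟩ := FreeGroup.toWord_mul_decomp u v
      have l1 : u.norm = p.length + c.length := by
        rw [norm_eq_length, e1, List.length_append]
      have l2 : v.norm = c.length + q.length := by
        rw [norm_eq_length, e2, List.length_append, FreeGroup.invRev_length]
      have l3 : (u * v).norm = p.length + q.length := by
        rw [norm_eq_length, e3, List.length_append]
      set t := u.norm / 2 + 1 with ht
      have htc : t ≤ c.length := by omega
      set c' := c.drop (c.length - t) with hc'
      have hc'len : c'.length = t := by rw [hc', List.length_drop]; omega
      have hc'suf : c' <:+ c := List.drop_suffix _ _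
      have hcred : FreeGroup.reduce c' = c' := by
        refine FreeGroup.reduced_infix (FreeGroup.reduce_toWord u)
          (?_ : u.toWord = (p ++ c.take (c.length - t)) ++ c' ++ [])
        rw [e1, List.append_nil, List.append_assoc, hc', List.take_append_drop]
      set s := FreeGroup.mk c' with hs
      have hsw : s.toWord = c' := by rw [hs, FreeGroup.toWord_mk, hcred]
      have hTu : TermSeg s u := by
        rw [TermSeg, hsw, e1]; exact hc'suf.trans (List.suffix_append p c)
      have hnorm_s : s.norm = t := by rw [norm_eq_length, hsw, hc'len]
      have hTv : TermSeg s v⁻¹ := by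
        rw [TermSeg, hsw, FreeGroup.toWord_inv, e2, FreeGroup.invRev_append',
          FreeGroup.invRev_invRev]
        exact hc'suf.trans (List.suffix_append _ _)
      have hvu := hT u hu s hTu (by omega) (by omega) v⁻¹ (mem_symbols_inv hv) hTv
      exact hne (by rw [← hvu, inv_mul_cancel])
    have hN1 : ∀ u ∈ Symbols (M : Set (FreeGroup X)),
        ∀ v ∈ Symbols (M : Set (FreeGroup X)), u * v ≠ 1 →
        u.norm ≤ (u * v).norm ∧ v.norm ≤ (u * v).norm := by
      intro u hu v hv hne
      refine ⟨?_, hN1core u hu v hv hne⟩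
      have h := hN1core v⁻¹ (mem_symbols_inv hv) u⁻¹ (mem_symbols_inv hu)
        (fun h => hne (by rwa [← mul_inv_rev, inv_eq_one] at h))
      rwa [← mul_inv_rev, FreeGroup.norm_inv_eq, FreeGroup.norm_inv_eq] at h
    intro v₁ hv₁ v₂ hv₂ v₃ hv₃
    refine ⟨?_, fun hne => hN1 v₁ hv₁ v₂ hv₂ hne, ?_⟩
    · rcases hv₁ with h | h
      · exact hnt v₁ (by exact_mod_cast h)
      · have hv' : v₁⁻¹ ∈ M := by
          have : v₁⁻¹ ∈ (M : Set (FreeGroup X)) := h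
          exact_mod_cast this
        intro h1
        exact hnt _ hv' (by rw [h1, inv_one])
    · intro hne12 hne23
      obtain ⟨p, c, q₁, e1, e2, e3⟩ := FreeGroup.toWord_mul_decomp v₁ v₂
      obtain ⟨p₂, d, q₂, f1, f2, f3⟩ := FreeGroup.toWord_mul_decomp v₂ v₃
      have l1 : v₁.norm = p.length + c.length := by
        rw [norm_eq_length, e1, List.length_append]
      have l2 : v₂.norm = c.length + q₁.length := by
        rw [norm_eq_length, e2, List.length_append, FreeGroup.invRev_length]
      have l2' : v₂.norm = p₂.length + d.length := by
        rw [norm_eq_length, f1, List.length_append]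
      have l3 : v₃.norm = d.length + q₂.length := by
        rw [norm_eq_length, f2, List.length_append, FreeGroup.invRev_length]
      have l12 : (v₁ * v₂).norm = p.length + q₁.length := by
        rw [norm_eq_length, e3, List.length_append]
      have l23 : (v₂ * v₃).norm = p₂.length + q₂.length := by
        rw [norm_eq_length, f3, List.length_append]
      have hc2 : 2 * c.length ≤ v₂.norm := by
        have := (hN1 v₁ hv₁ v₂ hv₂ hne12).1; omega
      have hd2 : 2 * d.length ≤ v₂.norm := by
        have := (hN1 v₂ hv₂ v₃ hv₃ hne23).2; omega
      have heq : FreeGroup.invRev c ++ q₁ = p₂ ++ d := by rw [← e2, ← f1]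
      have hlc : (FreeGroup.invRev c).length = c.length := FreeGroup.invRev_length
      by_cases hcd : c.length + d.length < v₂.norm
      · -- a middle part of v₂ survives in v₁ * v₂ * v₃
        set m := p₂.drop c.length with hm
        have hcp : c.length ≤ p₂.length := by omega
        have hmlen : m.length = p₂.length - c.length := by
          rw [hm, List.length_drop]
        have hmne : m ≠ [] := by
          intro h
          have := congrArg List.length h
          simp only [hmlen, List.length_nil] at this
          omega
        have hdrop := congrArg (List.drop c.length) heq
        rw [List.drop_append, List.drop_append] at hdrop
        rw [List.drop_of_length_le (le_of_eq hlc), hlc, Nat.sub_self, List.drop_zero,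
          Nat.sub_eq_zero_of_le hcp, List.drop_zero, List.nil_append] at hdrop
        -- hdrop : q₁ = p₂.drop c.length ++ d
        have hq₁ : q₁ = m ++ d := by rw [hm, ← hdrop]
        have htake := congrArg (List.take c.length) heq
        rw [List.take_append, List.take_append] at htake
        rw [List.take_of_length_le (le_of_eq hlc), hlc, Nat.sub_self, List.take_zero,
          Nat.sub_eq_zero_of_le hcp, List.take_zero, List.append_nil, List.append_nil] at htake
        -- htake : invRev c = p₂.take c.length
        have hp₂ : p₂ = FreeGroup.invRev c ++ m := by
          rw [htake, hm, List.take_append_drop]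
        have hw12 : (v₁ * v₂).toWord = p ++ (m ++ d) := by rw [e3, hq₁]
        have hr12 : FreeGroup.reduce (p ++ (m ++ d)) = p ++ (m ++ d) := by
          rw [← hw12]; exact FreeGroup.reduce_toWord _
        have hr3 : FreeGroup.reduce (FreeGroup.invRev d ++ q₂) = FreeGroup.invRev d ++ q₂ := by
          rw [← f2]; exact FreeGroup.reduce_toWord _
        obtain ⟨P, C, Q, g1, g2, g3⟩ := FreeGroup.mul_decomp _ _ hr12 hr3
        have hw123 : (v₁ * v₂ * v₃).toWord = P ++ Q := by
          have h0 : v₁ * v₂ * v₃ = FreeGroup.mk ((v₁ * v₂).toWord ++ v₃.toWord) := by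
            rw [← FreeGroup.mul_mk, FreeGroup.mk_toWord, FreeGroup.mk_toWord]
          rw [h0, FreeGroup.toWord_mk, hw12, f2, g3]
        have lP : p.length + (m.length + d.length) = P.length + C.length := by
          have := congrArg List.length g1; simpa using this
        have lQ : d.length + q₂.length = C.length + Q.length := by
          have := congrArg List.length g2
          simp only [List.length_append, FreeGroup.invRev_length] at this
          omega
        have l123 : (v₁ * v₂ * v₃).norm = P.length + Q.length := by
          rw [norm_eq_length, hw123, List.length_append]
        by_cases hC : C.length < m.length + d.length
        · omega
        · push_neg at hC
          exfalso
          have hsC : C <:+ p ++ (m ++ d) := ⟨P, g1.symm⟩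
          have hsmd : m ++ d <:+ p ++ (m ++ d) := List.suffix_append _ _
          have hmd_C : m ++ d <:+ C := by
            rcases List.suffix_or_suffix_of_suffix hsmd hsC with h | h
            · exact h
            · have hle := List.IsSuffix.length_le h
              have hCeq : C = m ++ d :=
                List.IsSuffix.eq_of_length h (by simp only [List.length_append] at hle ⊢; omega)
              rw [hCeq]
          obtain ⟨e, hCe⟩ := hmd_C
          have hQ : FreeGroup.invRev d ++ q₂ =
              FreeGroup.invRev d ++ (FreeGroup.invRev m ++ (FreeGroup.invRev e ++ Q)) := by
            rw [g2, ← hCe, FreeGroup.invRev_append', FreeGroup.invRev_append']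
            simp [List.append_assoc]
          have hq₂' : q₂ = FreeGroup.invRev m ++ (FreeGroup.invRev e ++ Q) :=
            List.append_cancel_left hQ
          rcases m.eq_nil_or_concat with hmnil | ⟨m', a, hma⟩
          · exact hmne hmnil
          · rw [List.concat_eq_append] at hma
            have hred : FreeGroup.reduce ((v₂ * v₃).toWord) = (v₂ * v₃).toWord :=
              FreeGroup.reduce_toWord _
            rw [f3, hp₂, hq₂', hma, FreeGroup.invRev_concat] at hred
            obtain ⟨x, b⟩ := a
            exact FreeGroup.reduce.not (p := False)
              (L₂ := FreeGroup.invRev c ++ m')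
              (L₃ := FreeGroup.invRev m' ++ (FreeGroup.invRev e ++ Q)) (x := x) (b := b)
              (hred.trans (by simp))
      · -- both halves of v₂ cancel: use condition (2)
        push_neg at hcd
        have hlen2 : (FreeGroup.invRev c).length = p₂.length := by
          rw [hlc]; omega
        obtain ⟨hpc, hqd⟩ := List.append_inj heq hlen2
        have hevv : Even v₂.norm := ⟨c.length, by omega⟩
        rcases hHalf v₂ hv₂ hevv with hiso | hiso
        · have hredc : FreeGroup.reduce (FreeGroup.invRev c) = FreeGroup.invRev c := by
            refine FreeGroup.reduced_infix (FreeGroup.reduce_toWord v₂)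
              (?_ : v₂.toWord = [] ++ FreeGroup.invRev c ++ q₁)
            rw [e2, List.nil_append]
          set s := FreeGroup.mk (FreeGroup.invRev c) with hs
          have hsw : s.toWord = FreeGroup.invRev c := by rw [hs, FreeGroup.toWord_mk, hredc]
          have hsnorm : 2 * s.norm = v₂.norm := by
            rw [norm_eq_length, hsw, FreeGroup.invRev_length]; omega
          have hInit : InitSeg s v₂ := by
            rw [InitSeg, hsw, e2]; exact List.prefix_append _ _
          have hIx : InitSeg s v₁⁻¹ := by
            rw [InitSeg, hsw, FreeGroup.toWord_inv, e1, FreeGroup.invRev_append']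
            exact List.prefix_append _ _
          have hvv := hiso s hInit hsnorm v₁⁻¹ (mem_symbols_inv hv₁) hIx
          exact absurd (by rw [← hvv, mul_inv_cancel]) hne12
        · have hredd : FreeGroup.reduce d = d := by
            refine FreeGroup.reduced_infix (FreeGroup.reduce_toWord v₂)
              (?_ : v₂.toWord = p₂ ++ d ++ [])
            rw [f1, List.append_nil]
          set s := FreeGroup.mk d with hs
          have hsw : s.toWord = d := by rw [hs, FreeGroup.toWord_mk, hredd]
          have hsnorm : 2 * s.norm = v₂.norm := by rw [norm_eq_length, hsw]; omega
          have hTerm : TermSeg s v₂ := by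
            rw [TermSeg, hsw, f1]; exact List.suffix_append _ _
          have hTx : TermSeg s v₃⁻¹ := by
            rw [TermSeg, hsw, FreeGroup.toWord_inv, f2, FreeGroup.invRev_append',
              FreeGroup.invRev_invRev]
            exact List.suffix_append _ _
          have hvv := hiso s hTerm hsnorm v₃⁻¹ (mem_symbols_inv hv₃) hTx
          exact absurd (by rw [← hvv, inv_mul_cancel]) hne23
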